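/- Define polynomials S_n(x,y) ∈ ℤ[x,y] by the identity (1-tx)(1-ty) = ∏_{n≥1}(1 - S_n(x,y) t^n) of formal power series. Then for all n ≥ 1, x^n + y^n = ∑_{d | n} d · S_d(x,y)^{n/d}. -/

import Mathlib

namespace SumDivisorsSAux

open PowerSeries Finset

variable {R : Type*} [CommRing R]

/-- Two power series agree in all coefficients up to `m`. -/
def AgreeLe (m : ℕ) (f g : R⟦X⟧) : Prop := ∀ i, i ≤ m → coeff (R := R) i f = coeff (R := R) i g

theorem AgreeLe.mul {m : ℕ} {f f' g g' : R⟦X⟧} (hf : AgreeLe m f f')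
    (hg : AgreeLe m g g') : AgreeLe m (f * g) (f' * g') := by
  intro i hi
  rw [coeff_mul, coeff_mul]
  refine Finset.sum_congr rfl fun p hp => ?_
  rw [Finset.HasAntidiagonal.mem_antidiagonal] at hp
  rw [hf p.1 (by omega), hg p.2 (by omega)]

theorem coeff_X_mul_derivative (f : R⟦X⟧) (m : ℕ) :
    coeff (R := R) m (X * d⁄dX R f) = (m : R) * coeff (R := R) m f := by
  cases m with
  | zero =>
    simp [coeff_zero_eq_constantCoeff]
  | succ k =>
    rw [coeff_succ_X_mul, coeff_derivative]
    push_cast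
    ring

theorem D_prod {ι : Type*} [DecidableEq ι] (s : Finset ι) (g : ι → R⟦X⟧) :
    X * d⁄dX R (∏ i ∈ s, g i) = ∑ i ∈ s, (X * d⁄dX R (g i)) * ∏ j ∈ s.erase i, g j := by
  induction s using Finset.induction_on with
  | empty => simp
  | @insert a s ha ih =>
    have h2 : ∀ i ∈ s, (X * d⁄dX R (g i)) * ∏ j ∈ (insert a s).erase i, g j
        = g a * ((X * d⁄dX R (g i)) * ∏ j ∈ s.erase i, g j) := by
      intro i hi
      have hia : i ≠ a := fun h => ha (h ▸ hi)
      rw [Finset.erase_insert_of_ne (Ne.symm hia),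
        Finset.prod_insert (fun h => ha (Finset.mem_of_mem_erase h))]
      ring
    rw [Finset.prod_insert ha, Derivation.leibniz, smul_eq_mul, smul_eq_mul, mul_add,
      Finset.sum_insert ha, Finset.erase_insert ha, Finset.sum_congr rfl h2,
      ← Finset.mul_sum, ← ih]
    ring

theorem D_one_sub (a : R) (k : ℕ) (hk : 1 ≤ k) :
    X * d⁄dX R (1 - C (R := R) a * X ^ k) = -(C (R := R) ((k : R) * a) * X ^ k) := by
  ext m
  rw [coeff_X_mul_derivative]
  simp only [map_sub, map_neg, coeff_one, coeff_C_mul, coeff_X_pow]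
  by_cases hmk : m = k
  · subst hmk
    rw [if_pos rfl, if_neg (by omega)]
    ring
  · rw [if_neg hmk]
    by_cases hm0 : m = 0
    · subst hm0; simp
    · rw [if_neg hm0]; ring

theorem geom_mul (a : R) :
    (PowerSeries.mk fun m => if m = 0 then 0 else a ^ m) * (1 - C (R := R) a * X) = C (R := R) a * X := by
  have h : (PowerSeries.mk fun m => if m = 0 then 0 else a ^ m) * (1 - C (R := R) a * X)
      = (PowerSeries.mk fun m => if m = 0 then 0 else a ^ m)
        - X * (C (R := R) a * PowerSeries.mk fun m => if m = 0 then 0 else a ^ m) := by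
    ring
  rw [h]
  ext m
  cases m with
  | zero => simp
  | succ k =>
    simp only [map_sub, coeff_succ_X_mul, coeff_C_mul, coeff_mk, coeff_X]
    cases k with
    | zero => simp
    | succ j =>
      rw [if_neg (by omega), if_neg (by omega), if_neg (by omega), pow_succ]
      ring

theorem q_mul (k : ℕ) (hk : 1 ≤ k) (s : R) :
    (PowerSeries.mk fun m => if m ≠ 0 ∧ k ∣ m then (k : R) * s ^ (m / k) else 0)
        * (1 - C (R := R) s * X ^ k)
      = C (R := R) ((k : R) * s) * X ^ k := by
  have h : (PowerSeries.mk fun m => if m ≠ 0 ∧ k ∣ m then (k : R) * s ^ (m / k) else 0)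
        * (1 - C (R := R) s * X ^ k)
      = (PowerSeries.mk fun m => if m ≠ 0 ∧ k ∣ m then (k : R) * s ^ (m / k) else 0)
        - ((PowerSeries.mk fun m => if m ≠ 0 ∧ k ∣ m then (k : R) * s ^ (m / k) else 0)
            * C (R := R) s) * X ^ k := by
    ring
  rw [h]
  ext m
  simp only [map_sub, coeff_mul_X_pow', coeff_mul_C, coeff_mk, coeff_C]
  by_cases hdvd : k ∣ m
  · obtain ⟨t, rfl⟩ := hdvd
    match t with
    | 0 =>
      rw [Nat.mul_zero, if_neg (by simp), if_neg (show ¬ k ≤ 0 by omega),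
        if_neg (show ¬ k ≤ 0 by omega)]
      ring
    | 1 =>
      rw [Nat.mul_one, if_pos ⟨by omega, dvd_refl k⟩,
        Nat.div_self (show 0 < k by omega), Nat.sub_self,
        if_pos (Nat.le_refl k), if_pos (Nat.le_refl k),
        if_neg (by simp), if_pos rfl]
      ring
    | (j+2) =>
      have h1 : k * (j + 2) - k = k * (j + 1) := by
        rw [show j + 2 = (j + 1) + 1 from rfl, Nat.mul_succ, Nat.add_sub_cancel]
      have hle : k ≤ k * (j + 2) := by nlinarith
      have hne2 : k * (j + 2) ≠ 0 := Nat.mul_ne_zero (by omega) (by omega)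
      have hne1 : k * (j + 1) ≠ 0 := Nat.mul_ne_zero (by omega) (by omega)
      rw [if_pos ⟨hne2, dvd_mul_right k _⟩,
        Nat.mul_div_cancel_left _ (show 0 < k by omega), h1,
        if_pos hle, if_pos hle,
        if_pos ⟨hne1, dvd_mul_right k _⟩,
        Nat.mul_div_cancel_left _ (show 0 < k by omega),
        if_neg hne1, pow_succ]
      ring
  · have hmk : m ≠ k := fun h => hdvd (h ▸ dvd_refl k)
    rw [if_neg (by tauto)]
    by_cases hle : k ≤ m
    · rw [if_pos hle, if_pos hle, if_neg (fun hc => hdvd (by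
        have h2 : k ∣ (m - k) + k := hc.2.add (dvd_refl k)
        rwa [Nat.sub_add_cancel hle] at h2)), if_neg (show ¬ m - k = 0 by omega)]
      ring
    · rw [if_neg hle, if_neg hle]
      ring

theorem P_mul (x y : R) :
    (PowerSeries.mk fun m => if m = 0 then 0 else x ^ m + y ^ m)
        * ((1 - C (R := R) x * X) * (1 - C (R := R) y * X))
      = -(X * d⁄dX R ((1 - C (R := R) x * X) * (1 - C (R := R) y * X))) := by
  have hP : (PowerSeries.mk fun m => if m = 0 then 0 else x ^ m + y ^ m)
      = (PowerSeries.mk fun m => if m = 0 then 0 else x ^ m)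
        + PowerSeries.mk fun m => if m = 0 then 0 else y ^ m := by
    ext m
    rw [map_add, coeff_mk, coeff_mk, coeff_mk]
    split <;> simp
  have hD : X * d⁄dX R ((1 - C (R := R) x * X) * (1 - C (R := R) y * X))
      = (X * d⁄dX R (1 - C (R := R) x * X)) * (1 - C (R := R) y * X)
        + (X * d⁄dX R (1 - C (R := R) y * X)) * (1 - C (R := R) x * X) := by
    rw [Derivation.leibniz, smul_eq_mul, smul_eq_mul]
    ring
  have h1x : X * d⁄dX R (1 - C (R := R) x * X) = -(C (R := R) x * X) := by
    have := D_one_sub x 1 le_rfl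
    simpa using this
  have h1y : X * d⁄dX R (1 - C (R := R) y * X) = -(C (R := R) y * X) := by
    have := D_one_sub y 1 le_rfl
    simpa using this
  rw [hP, hD, h1x, h1y]
  have hx := geom_mul (R := R) x
  have hy := geom_mul (R := R) y
  linear_combination (1 - C (R := R) y * X) * hx + (1 - C (R := R) x * X) * hy

theorem Q_mul (S : ℕ → R) (N : ℕ) :
    (∑ k ∈ Finset.Icc 1 N,
        PowerSeries.mk fun m => if m ≠ 0 ∧ k ∣ m then (k : R) * S k ^ (m / k) else 0)
        * (∏ k ∈ Finset.Icc 1 N, (1 - C (R := R) (S k) * X ^ k))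
      = -(X * d⁄dX R (∏ k ∈ Finset.Icc 1 N, (1 - C (R := R) (S k) * X ^ k))) := by
  rw [Finset.sum_mul, D_prod, ← Finset.sum_neg_distrib]
  refine Finset.sum_congr rfl fun k hk => ?_
  have hk1 : 1 ≤ k := (Finset.mem_Icc.mp hk).1
  rw [D_one_sub (S k) k hk1, ← Finset.mul_prod_erase _ _ hk]
  have hq := q_mul k hk1 (S k)
  linear_combination (∏ j ∈ (Finset.Icc 1 N).erase k, (1 - C (R := R) (S j) * X ^ j)) * hq

theorem agree_FG (x y : R) (S : ℕ → R)
    (hS : ∀ N : ℕ,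
      coeff (R := R) N ((1 - C (R := R) x * X) * (1 - C (R := R) y * X)) =
      coeff (R := R) N (∏ n ∈ Finset.Icc 1 N, (1 - C (R := R) (S n) * X ^ n))) (N : ℕ) :
    AgreeLe N ((1 - C (R := R) x * X) * (1 - C (R := R) y * X))
      (∏ k ∈ Finset.Icc 1 N, (1 - C (R := R) (S k) * X ^ k)) := by
  intro m hm
  rw [hS m]
  have key : AgreeLe m (∏ k ∈ Finset.Ioc m N, (1 - C (R := R) (S k) * X ^ k)) 1 := by
    refine Finset.prod_induction _ (fun z => AgreeLe m z 1) ?_ (fun i _ => rfl) ?_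
    · intro p q hp hq
      have := AgreeLe.mul hp hq
      rwa [one_mul] at this
    · intro j hj i hi
      rw [Finset.mem_Ioc] at hj
      have hij : i ≠ j := by omega
      simp [coeff_one, coeff_C_mul, coeff_X_pow, hij]
  have hsplit : Finset.Icc 1 m ∪ Finset.Ioc m N = Finset.Icc 1 N := by
    ext i
    simp only [Finset.mem_union, Finset.mem_Icc, Finset.mem_Ioc]
    omega
  have hdisj : Disjoint (Finset.Icc 1 m) (Finset.Ioc m N) := by
    rw [Finset.disjoint_left]
    intro i hi hi'
    rw [Finset.mem_Icc] at hi
    rw [Finset.mem_Ioc] at hi'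
    omega
  rw [← hsplit, Finset.prod_union hdisj]
  have := AgreeLe.mul (m := m)
    (f := ∏ k ∈ Finset.Icc 1 m, (1 - C (R := R) (S k) * X ^ k))
    (f' := ∏ k ∈ Finset.Icc 1 m, (1 - C (R := R) (S k) * X ^ k))
    (fun i _ => rfl) key m le_rfl
  rw [mul_one] at this
  exact this.symm

theorem cancel {N : ℕ} (x y : R) (f : R⟦X⟧)
    (h : ∀ m, m ≤ N → coeff (R := R) m (f * ((1 - C (R := R) x * X) * (1 - C (R := R) y * X))) = 0) :
    ∀ m, m ≤ N → coeff (R := R) m f = 0 := by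
  intro m
  induction m using Nat.strong_induction_on with
  | _ m ih =>
    intro hm
    have key : f * ((1 - C (R := R) x * X) * (1 - C (R := R) y * X))
        = f + X * (f * (C (R := R) x * C (R := R) y * X - (C (R := R) x + C (R := R) y))) := by
      ring
    have h2 := h m hm
    rw [key, map_add] at h2
    cases m with
    | zero =>
      simpa [coeff_zero_eq_constantCoeff] using h2
    | succ k =>
      rw [coeff_succ_X_mul, coeff_mul] at h2
      have hz : ∀ p ∈ Finset.HasAntidiagonal.antidiagonal k,
          coeff (R := R) p.1 f * coeff (R := R) p.2 (C (R := R) x * C (R := R) y * X - (C (R := R) x + C (R := R) y)) = 0 := by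
        intro p hp
        rw [Finset.HasAntidiagonal.mem_antidiagonal] at hp
        rw [ih p.1 (by omega) (by omega), zero_mul]
      rw [Finset.sum_eq_zero hz, add_zero] at h2
      exact h2

end SumDivisorsSAux

open PowerSeries in
/-- If the family `S n` of elements of a commutative ring satisfies the
defining identity `(1-tx)(1-ty) = ∏_{n≥1} (1 - S_n t^n)` (expressed
coefficientwise, using that only factors with `n ≤ N` contribute to the
coefficient of `t^N`), then `x^n + y^n = ∑_{d ∣ n} d • S_d^{n/d}`. -/
theorem sum_divisors_S {R : Type*} [CommRing R] (x y : R) (S : ℕ → R)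
    (hS : ∀ N : ℕ,
      coeff (R := R) N ((1 - C (R := R) x * X) * (1 - C (R := R) y * X)) =
      coeff (R := R) N (∏ n ∈ Finset.Icc 1 N, (1 - C (R := R) (S n) * X ^ n))) :
    ∀ n : ℕ, 1 ≤ n →
      x ^ n + y ^ n = ∑ d ∈ n.divisors, (d : R) * S d ^ (n / d) := by
  classical
  intro n hn
  set F : R⟦X⟧ := (1 - C (R := R) x * X) * (1 - C (R := R) y * X) with hF
  set G : R⟦X⟧ := ∏ k ∈ Finset.Icc 1 n, (1 - C (R := R) (S k) * X ^ k) with hG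
  set P : R⟦X⟧ := PowerSeries.mk fun m => if m = 0 then 0 else x ^ m + y ^ m with hP
  set Q : R⟦X⟧ := ∑ k ∈ Finset.Icc 1 n,
    PowerSeries.mk fun m => if m ≠ 0 ∧ k ∣ m then (k : R) * S k ^ (m / k) else 0 with hQ
  have hFG : SumDivisorsSAux.AgreeLe n F G := SumDivisorsSAux.agree_FG x y S hS n
  have hD : ∀ m, m ≤ n → coeff (R := R) m (P * F) = coeff (R := R) m (Q * G) := by
    intro m hm
    rw [hP, hF, SumDivisorsSAux.P_mul, hQ, hG, SumDivisorsSAux.Q_mul, map_neg, map_neg,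
      SumDivisorsSAux.coeff_X_mul_derivative, SumDivisorsSAux.coeff_X_mul_derivative]
    rw [show coeff (R := R) m ((1 - C (R := R) x * X) * (1 - C (R := R) y * X)) =
      coeff (R := R) m (∏ k ∈ Finset.Icc 1 n, (1 - C (R := R) (S k) * X ^ k)) from hFG m hm]
  have hQF : ∀ m, m ≤ n → coeff (R := R) m (Q * G) = coeff (R := R) m (Q * F) :=
    fun m hm => SumDivisorsSAux.AgreeLe.mul (fun i _ => rfl)
      (fun i hi => (hFG i hi).symm) m hm
  have hzero : ∀ m, m ≤ n → coeff (R := R) m ((P - Q) * F) = 0 := by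
    intro m hm
    rw [sub_mul, map_sub, hD m hm, hQF m hm, sub_self]
  have hPQ : coeff (R := R) n (P - Q) = 0 :=
    SumDivisorsSAux.cancel x y (P - Q) hzero n le_rfl
  rw [map_sub, sub_eq_zero] at hPQ
  have hPn : coeff (R := R) n P = x ^ n + y ^ n := by
    rw [hP, coeff_mk, if_neg (by omega)]
  have hQn : coeff (R := R) n Q = ∑ d ∈ n.divisors, (d : R) * S d ^ (n / d) := by
    rw [hQ, map_sum]
    simp only [coeff_mk]
    have hcong : ∀ k ∈ Finset.Icc 1 n,
        (if n ≠ 0 ∧ k ∣ n then (k : R) * S k ^ (n / k) else 0)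
          = if k ∣ n then (k : R) * S k ^ (n / k) else 0 := by
      intro k _
      have hn0 : n ≠ 0 := by omega
      simp [hn0]
    have hdiv : n.divisors = Finset.filter (fun d => d ∣ n) (Finset.Icc 1 n) := by
      ext d
      simp only [Finset.mem_filter, Finset.mem_Icc, Nat.mem_divisors]
      constructor
      · rintro ⟨h1, h2⟩
        have hd0 : d ≠ 0 := by
          rintro rfl
          exact h2 (Nat.eq_zero_of_zero_dvd h1)
        exact ⟨⟨by omega, Nat.le_of_dvd (by omega) h1⟩, h1⟩
      · rintro ⟨⟨h1, h2⟩, h3⟩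
        exact ⟨h3, by omega⟩
    rw [Finset.sum_congr rfl hcong, ← Finset.sum_filter, hdiv]
  rw [← hPn, hPQ, hQn]
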